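/- Let β, J > 0 and define h(x) = coth(x) − 1/x with h(0) = 0. The equation ξ = βJ·h(ξ) admits a (unique) solution ξ > 0 if and only if βJ > 3. -/

import Mathlib

open Real Set Filter Topology

/-- positivity on `(0,∞)` from derivative positivity. -/
private lemma pos_of_hasDerivAt_pos (f f' : ℝ → ℝ)
    (hd : ∀ x, HasDerivAt f (f' x) x) (h0 : f 0 = 0)
    (hpos : ∀ x, 0 < x → 0 < f' x) {x : ℝ} (hx : 0 < x) : 0 < f x := by
  have hmono : StrictMonoOn f (Set.Ici 0) := by
    apply strictMonoOn_of_deriv_pos (convex_Ici 0)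
    · exact fun y _ => (hd y).continuousAt.continuousWithinAt
    · intro y hy
      rw [interior_Ici] at hy
      rw [(hd y).deriv]
      exact hpos y hy
  have := hmono Set.self_mem_Ici (Set.mem_Ici.mpr hx.le) hx
  rwa [h0] at this

private lemma lem_G {x : ℝ} (hx : 0 < x) : Real.sinh x < x * Real.cosh x := by
  have h : 0 < x * Real.cosh x - Real.sinh x := by
    apply pos_of_hasDerivAt_pos (fun t => t * Real.cosh t - Real.sinh t)
      (fun t => t * Real.sinh t) _ (by simp) _ hx
    · intro y
      have h := ((hasDerivAt_id' (x := y)).mul (Real.hasDerivAt_cosh y)).sub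
        (Real.hasDerivAt_sinh y)
      refine h.congr_deriv ?_
      ring
    · intro y hy
      exact mul_pos hy (Real.sinh_pos_iff.mpr hy)
  linarith

private lemma lem_F {x : ℝ} (hx : 0 < x) :
    3 * (x * Real.cosh x - Real.sinh x) < x ^ 2 * Real.sinh x := by
  have h : 0 < x ^ 2 * Real.sinh x + 3 * Real.sinh x - 3 * (x * Real.cosh x) := by
    apply pos_of_hasDerivAt_pos
      (fun t => t ^ 2 * Real.sinh t + 3 * Real.sinh t - 3 * (t * Real.cosh t))
      (fun t => t * (t * Real.cosh t - Real.sinh t)) _ (by simp) _ hx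
    · intro y
      have h := (((hasDerivAt_pow 2 y).mul (Real.hasDerivAt_sinh y)).add
        ((hasDerivAt_const y (3:ℝ)).mul (Real.hasDerivAt_sinh y))).sub
        ((hasDerivAt_const y (3:ℝ)).mul
          ((hasDerivAt_id' (x := y)).mul (Real.hasDerivAt_cosh y)))
      refine h.congr_deriv ?_
      ring
    · intro y hy
      exact mul_pos hy (by linarith [lem_G hy])
  linarith

private lemma lem_N_lb {x : ℝ} (hx : 0 < x) :
    x ^ 3 / 3 < x * Real.cosh x - Real.sinh x := by
  have h : 0 < x * Real.cosh x - Real.sinh x - x ^ 3 / 3 := by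
    apply pos_of_hasDerivAt_pos
      (fun t => t * Real.cosh t - Real.sinh t - t ^ 3 / 3)
      (fun t => t * (Real.sinh t - t)) _ (by simp) _ hx
    · intro y
      have h := (((hasDerivAt_id' (x := y)).mul (Real.hasDerivAt_cosh y)).sub
        (Real.hasDerivAt_sinh y)).sub ((hasDerivAt_pow 3 y).div_const 3)
      refine h.congr_deriv ?_
      ring
    · intro y hy
      exact mul_pos hy (by linarith [Real.self_lt_sinh_iff.mpr hy])
  linarith

private lemma lem_h_ub {x : ℝ} (hx : 0 < x) :
    x * Real.cosh x - Real.sinh x < x * Real.sinh x := by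
  have h : 2 * x + 1 < Real.exp (2 * x) := by
    have := Real.add_one_lt_exp (by positivity : (2:ℝ) * x ≠ 0)
    linarith
  rw [Real.cosh_eq, Real.sinh_eq]
  have hex : Real.exp (2 * x) = Real.exp x * Real.exp x := by
    rw [← Real.exp_add]; ring_nf
  have hxx : Real.exp x * Real.exp (-x) = 1 := by
    rw [← Real.exp_add]; simp
  nlinarith [Real.exp_pos x, Real.exp_pos (-x)]

/-- Key inequality: `2 sinh² x < x² + x sinh x cosh x` for `x > 0`. -/
private lemma lem_P {x : ℝ} (hx : 0 < x) :
    2 * Real.sinh x ^ 2 < x ^ 2 + x * Real.sinh x * Real.cosh x := by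
  have hP2 : ∀ t : ℝ, 0 < t →
      0 < 2 + 4 * t * Real.sinh t * Real.cosh t - 2 * Real.cosh t ^ 2
        - 2 * Real.sinh t ^ 2 := by
    intro t ht
    apply pos_of_hasDerivAt_pos
      (fun s => 2 + 4 * s * Real.sinh s * Real.cosh s - 2 * Real.cosh s ^ 2
        - 2 * Real.sinh s ^ 2)
      (fun s => 4 * (s * (Real.cosh s ^ 2 + Real.sinh s ^ 2)
        - Real.sinh s * Real.cosh s)) _ (by simp) _ ht
    · intro y
      have h := (((hasDerivAt_const y (2:ℝ)).add
          (((((hasDerivAt_const y (4:ℝ)).mul (hasDerivAt_id' (x := y))).mul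
            (Real.hasDerivAt_sinh y)).mul (Real.hasDerivAt_cosh y)))).sub
          ((hasDerivAt_const y (2:ℝ)).mul ((Real.hasDerivAt_cosh y).pow 2))).sub
          ((hasDerivAt_const y (2:ℝ)).mul ((Real.hasDerivAt_sinh y).pow 2))
      refine h.congr_deriv ?_
      simp only [Pi.mul_apply, Pi.add_apply, Pi.pow_apply]
      ring
    · intro y hy
      have hG := lem_G hy
      have hc := Real.cosh_pos (x := y)
      have hs := Real.sinh_pos_iff.mpr hy
      nlinarith [mul_lt_mul_of_pos_right hG hc,
        mul_nonneg hy.le (sq_nonneg (Real.sinh y))]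
  have hP1 : ∀ t : ℝ, 0 < t →
      0 < 2 * t + t * (Real.cosh t ^ 2 + Real.sinh t ^ 2)
        - 3 * (Real.sinh t * Real.cosh t) := by
    intro t ht
    apply pos_of_hasDerivAt_pos
      (fun s => 2 * s + s * (Real.cosh s ^ 2 + Real.sinh s ^ 2)
        - 3 * (Real.sinh s * Real.cosh s))
      (fun s => 2 + 4 * s * Real.sinh s * Real.cosh s - 2 * Real.cosh s ^ 2
        - 2 * Real.sinh s ^ 2) _ (by simp) _ ht
    · intro y
      have h := ((((hasDerivAt_const y (2:ℝ)).mul (hasDerivAt_id' (x := y))).add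
          ((hasDerivAt_id' (x := y)).mul (((Real.hasDerivAt_cosh y).pow 2).add
            ((Real.hasDerivAt_sinh y).pow 2)))).sub
          ((hasDerivAt_const y (3:ℝ)).mul ((Real.hasDerivAt_sinh y).mul
            (Real.hasDerivAt_cosh y))))
      refine h.congr_deriv ?_
      simp only [Pi.mul_apply, Pi.add_apply, Pi.pow_apply]
      ring
    · exact hP2
  have hP : 0 < x ^ 2 + x * Real.sinh x * Real.cosh x - 2 * Real.sinh x ^ 2 := by
    apply pos_of_hasDerivAt_pos
      (fun s => s ^ 2 + s * Real.sinh s * Real.cosh s - 2 * Real.sinh s ^ 2)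
      (fun s => 2 * s + s * (Real.cosh s ^ 2 + Real.sinh s ^ 2)
        - 3 * (Real.sinh s * Real.cosh s)) _ (by simp) _ hx
    · intro y
      have hid := Real.cosh_sq_sub_sinh_sq y
      have h := ((hasDerivAt_pow 2 y).add
          (((hasDerivAt_id' (x := y)).mul (Real.hasDerivAt_sinh y)).mul
            (Real.hasDerivAt_cosh y))).sub
          ((hasDerivAt_const y (2:ℝ)).mul ((Real.hasDerivAt_sinh y).pow 2))
      refine h.congr_deriv ?_
      push_cast
      simp only [Pi.mul_apply, Pi.add_apply, Pi.pow_apply]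
      ring
    · exact hP1
  linarith

/-- `h(x) = coth x − 1/x` for `x > 0`, with `h(0) = 0`. -/
noncomputable def hfun (x : ℝ) : ℝ :=
  if x = 0 then 0 else Real.cosh x / Real.sinh x - 1 / x

/-- `g(x) = h(x)/x` for `x > 0`. -/
noncomputable def gfun (x : ℝ) : ℝ :=
  (x * Real.cosh x - Real.sinh x) / (x ^ 2 * Real.sinh x)

private lemma hfun_eq_mul_gfun {x : ℝ} (hx : x ≠ 0) : hfun x = x * gfun x := by
  have hs : Real.sinh x ≠ 0 := Real.sinh_ne_zero.mpr hx
  rw [hfun, if_neg hx, gfun]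
  field_simp

private lemma hasDerivAt_gfun {x : ℝ} (hx : 0 < x) :
    HasDerivAt gfun
      ((x * Real.sinh x * (x ^ 2 * Real.sinh x) -
        (x * Real.cosh x - Real.sinh x) *
          (2 * x * Real.sinh x + x ^ 2 * Real.cosh x)) /
        (x ^ 2 * Real.sinh x) ^ 2) x := by
  have hs : Real.sinh x ≠ 0 := (Real.sinh_pos_iff.mpr hx).ne'
  have hD : x ^ 2 * Real.sinh x ≠ 0 := by positivity
  have hN : HasDerivAt (fun t => t * Real.cosh t - Real.sinh t) (x * Real.sinh x) x := by
    have h := ((hasDerivAt_id' (x := x)).mul (Real.hasDerivAt_cosh x)).sub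
      (Real.hasDerivAt_sinh x)
    refine h.congr_deriv ?_; ring
  have hDd : HasDerivAt (fun t => t ^ 2 * Real.sinh t)
      (2 * x * Real.sinh x + x ^ 2 * Real.cosh x) x := by
    have h := (hasDerivAt_pow 2 x).mul (Real.hasDerivAt_sinh x)
    refine h.congr_deriv ?_; ring
  exact hN.div hDd hD

private lemma gfun_strictAntiOn : StrictAntiOn gfun (Set.Ioi 0) := by
  apply strictAntiOn_of_deriv_neg (convex_Ioi 0)
  · intro y hy
    exact (hasDerivAt_gfun hy).continuousAt.continuousWithinAt
  · intro y hy
    rw [interior_Ioi] at hy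
    rw [(hasDerivAt_gfun hy).deriv]
    have hP := lem_P hy
    have hs := Real.sinh_pos_iff.mpr hy
    have hid := Real.cosh_sq_sub_sinh_sq y
    apply div_neg_of_neg_of_pos
    · have hkey : 0 < y * (y ^ 2 + y * Real.sinh y * Real.cosh y
          - 2 * Real.sinh y ^ 2) := mul_pos hy (by linarith)
      have heq : y * Real.sinh y * (y ^ 2 * Real.sinh y) -
          (y * Real.cosh y - Real.sinh y) *
            (2 * y * Real.sinh y + y ^ 2 * Real.cosh y)
          = -(y * (y ^ 2 + y * Real.sinh y * Real.cosh y - 2 * Real.sinh y ^ 2))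
            + y ^ 3 * (1 + Real.sinh y ^ 2 - Real.cosh y ^ 2) := by ring
      rw [heq]
      have h0 : (1:ℝ) + Real.sinh y ^ 2 - Real.cosh y ^ 2 = 0 := by linarith
      rw [h0, mul_zero, add_zero]
      linarith
    · exact pow_pos (mul_pos (pow_pos hy 2) hs) 2

theorem exists_unique_pos_fixed_point_iff (β J : ℝ) (hβ : 0 < β) (hJ : 0 < J) :
    (∃! ξ : ℝ, 0 < ξ ∧ ξ = β * J * hfun ξ) ↔ 3 < β * J := by
  have hK0 : 0 < β * J := mul_pos hβ hJ
  set K := β * J with hKdef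
  constructor
  · rintro ⟨ξ, ⟨hξ, hfix⟩, -⟩
    have hs := Real.sinh_pos_iff.mpr hξ
    have hN := lem_G hξ
    have hF := lem_F hξ
    rw [hfun, if_neg hξ.ne'] at hfix
    have hD : ξ * (ξ * Real.sinh ξ) = K * (ξ * Real.cosh ξ - Real.sinh ξ) := by
      have h1 : ξ * (ξ * Real.sinh ξ) =
          (K * (Real.cosh ξ / Real.sinh ξ - 1 / ξ)) * (ξ * Real.sinh ξ) := by
        rw [← hfix]
      rw [h1]
      field_simp
    nlinarith [hN, hF, hs, hξ, hD]
  · intro hK3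
    obtain ⟨a, ha0, hacosh⟩ : ∃ a : ℝ, 0 < a ∧ Real.cosh a < K / 3 := by
      have h1 : (1:ℝ) < K / 3 := by linarith
      have h2 : Filter.Tendsto Real.cosh (𝓝 0) (𝓝 1) := by
        have := Real.continuous_cosh.continuousAt (x := (0:ℝ))
        rwa [ContinuousAt, Real.cosh_zero] at this
      have h4 : ∀ᶠ x in 𝓝[>] (0:ℝ), Real.cosh x < K / 3 :=
        eventually_nhdsWithin_of_eventually_nhds (h2.eventually_lt_const h1)
      obtain ⟨a, h5, h6⟩ := (h4.and self_mem_nhdsWithin).exists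
      exact ⟨a, h6, h5⟩
    set a₀ : ℝ := min a 1 with ha₀def
    have ha₀0 : 0 < a₀ := lt_min ha0 one_pos
    have ha₀cosh : Real.cosh a₀ < K / 3 := by
      have hle : Real.cosh a₀ ≤ Real.cosh a := by
        rw [Real.cosh_le_cosh, abs_of_pos ha₀0, abs_of_pos ha0]
        exact min_le_left _ _
      linarith
    set b : ℝ := K + 1 with hbdef
    have hb0 : 0 < b := by linarith
    have hab : a₀ ≤ b := by
      have : a₀ ≤ 1 := min_le_right _ _
      linarith
    have hga : 1 / K < gfun a₀ := by
      have hs := Real.sinh_pos_iff.mpr ha₀0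
      have hlb := lem_N_lb ha₀0
      have hG := lem_G ha₀0
      have hDpos : 0 < a₀ ^ 2 * Real.sinh a₀ := by positivity
      rw [gfun, div_lt_div_iff₀ hK0 hDpos, one_mul]
      have hcpos := Real.cosh_pos (x := a₀)
      nlinarith [mul_pos (pow_pos ha₀0 3) hcpos,
        mul_lt_mul_of_pos_left hacosh (pow_pos ha₀0 3),
        mul_lt_mul_of_pos_right hG (mul_pos ha₀0 ha₀0)]
    have hgb : gfun b < 1 / K := by
      have hs := Real.sinh_pos_iff.mpr hb0
      have hub := lem_h_ub hb0
      have hDpos : 0 < b ^ 2 * Real.sinh b := by positivity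
      rw [gfun, div_lt_div_iff₀ hDpos hK0, one_mul]
      nlinarith [mul_lt_mul_of_pos_left hub hK0, mul_pos hb0 hs]
    have hcont : ContinuousOn gfun (Set.Icc a₀ b) := by
      apply ContinuousOn.div
      · exact (Continuous.continuousOn (by continuity))
      · exact (Continuous.continuousOn (by continuity))
      · intro x hx
        have hx0 : 0 < x := lt_of_lt_of_le ha₀0 hx.1
        have := Real.sinh_pos_iff.mpr hx0
        positivity
    obtain ⟨ξ, hξmem, hgξ⟩ :=
      intermediate_value_Icc' hab hcont ⟨hgb.le, hga.le⟩
    have hξ0 : 0 < ξ := lt_of_lt_of_le ha₀0 hξmem.1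
    have hfix : ξ = K * hfun ξ := by
      rw [hfun_eq_mul_gfun hξ0.ne', hgξ]
      field_simp
    refine ⟨ξ, ⟨hξ0, hfix⟩, ?_⟩
    rintro y ⟨hy0, hyfix⟩
    have hgy : gfun y = 1 / K := by
      rw [hfun_eq_mul_gfun hy0.ne'] at hyfix
      have h1 : y * 1 = y * (K * gfun y) := by rw [mul_one]; linear_combination hyfix
      have h2 := mul_left_cancel₀ hy0.ne' h1
      rw [eq_div_iff hK0.ne']
      linarith
    exact gfun_strictAntiOn.injOn (Set.mem_Ioi.mpr hy0) (Set.mem_Ioi.mpr hξ0)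
      (by rw [hgy, hgξ])
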